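/- Let Y be an Esakia space and X a dense subspace with induced order such that ↑_X x is dense in ↑_Y x for every x ∈ X (i.e., Y is an Esakia order-compactification of X). Then for any open subsets W ⊆ Y, setting U = W ∩ X, one has ↓_X U = (↓_Y W) ∩ X; consequently X is continuously ordered (↓ of opens are open and ↑x is closed in X). -/
import Mathlib


/-- Let `Y` be an Esakia space and `X` a dense subset such that `↑_X x` is dense in
`↑_Y x` for every `x ∈ X`. Then for every open `W ⊆ Y`, with `U = W ∩ X`, one has
`↓_X U = (↓_Y W) ∩ X`; consequently `X` is continuously ordered: `↓_X` of an open
subset of `X` is open in `X`, and `↑x` is closed in `X` for every `x`. -/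
theorem esakia_compactification_downset_eq
    {Y : Type*} [TopologicalSpace Y] [PartialOrder Y] [CompactSpace Y] [T2Space Y]
    (hzd : TopologicalSpace.IsTopologicalBasis {s : Set Y | IsClopen s})
    (hpries : ∀ x y : Y, ¬ x ≤ y →
      ∃ U : Set Y, IsClopen U ∧ IsUpperSet U ∧ x ∈ U ∧ y ∉ U)
    (hdown : ∀ V : Set Y, IsOpen V → IsOpen {y : Y | ∃ v ∈ V, y ≤ v})
    (hup : ∀ y : Y, IsClosed (Set.Ici y))
    (X : Set Y) (hdense : Dense X)
    (hupdense : ∀ x ∈ X, Set.Ici x ⊆ closure (Set.Ici x ∩ X)) :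
    (∀ W : Set Y, IsOpen W →
      {x : Y | x ∈ X ∧ ∃ u ∈ W ∩ X, x ≤ u} = {y : Y | ∃ w ∈ W, y ≤ w} ∩ X) ∧
    (∀ U : Set X, IsOpen U → IsOpen {x : X | ∃ u ∈ U, x ≤ u}) ∧
    (∀ x : X, IsClosed (Set.Ici x)) := by
  have key : ∀ W : Set Y, IsOpen W →
      {x : Y | x ∈ X ∧ ∃ u ∈ W ∩ X, x ≤ u} = {y : Y | ∃ w ∈ W, y ≤ w} ∩ X := by
    intro W hW
    ext x
    constructor
    · rintro ⟨hxX, u, ⟨huW, huX⟩, hxu⟩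
      exact ⟨⟨u, huW, hxu⟩, hxX⟩
    · rintro ⟨⟨w, hwW, hxw⟩, hxX⟩
      refine ⟨hxX, ?_⟩
      have hw : w ∈ closure (Set.Ici x ∩ X) := hupdense x hxX hxw
      obtain ⟨u, huW, hxu, huX⟩ := mem_closure_iff.mp hw W hW hwW
      exact ⟨u, ⟨huW, huX⟩, hxu⟩
  refine ⟨key, ?_, ?_⟩
  · intro U hU
    obtain ⟨W, hW, rfl⟩ := isOpen_induced_iff.mp hU
    have : {x : X | ∃ u ∈ Subtype.val ⁻¹' W, x ≤ u}
        = Subtype.val ⁻¹' {y : Y | ∃ w ∈ W, y ≤ w} := by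
      ext x
      constructor
      · rintro ⟨u, huW, hxu⟩
        exact ⟨u.1, huW, hxu⟩
      · rintro hx
        have : (x : Y) ∈ {x : Y | x ∈ X ∧ ∃ u ∈ W ∩ X, x ≤ u} := by
          rw [key W hW]; exact ⟨hx, x.2⟩
        obtain ⟨-, u, ⟨huW, huX⟩, hxu⟩ := this
        exact ⟨⟨u, huX⟩, huW, hxu⟩
    rw [this]
    exact (hdown W hW).preimage continuous_subtype_val
  · intro x
    have : (Set.Ici x : Set X) = Subtype.val ⁻¹' Set.Ici (x : Y) := by
      ext a; exact Iff.rfl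
    rw [this]
    exact (hup x).preimage continuous_subtype_val
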